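/- Let f : ℝ → ℝ be an arbitrary function, let M, N ≥ 1 be integers and let a ≥ 0 be an integer. Then |Σ_{x=0}^{N−1} e(f(x))| ≤ (1/M²)·Σ_{x=0}^{N−1} |Σ_{y=1}^{M} Σ_{z=1}^{M} e(f(x + a·y·z))| + 2·a·M². -/

import Mathlib

open Finset

lemma sum_abs_one_le {g : ℕ → ℂ} (h : ∀ n, ‖g n‖ = 1) (s : Finset ℕ) :
    ‖∑ x ∈ s, g x‖ ≤ s.card := by
  calc ‖∑ x ∈ s, g x‖ ≤ ∑ x ∈ s, ‖g x‖ :=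
        norm_sum_le _ _
    _ = s.card := by simp [h]

lemma shift_err {g : ℕ → ℂ} (h : ∀ n, ‖g n‖ = 1) (N k : ℕ) :
    ‖(∑ x ∈ range N, g x) - ∑ x ∈ range N, g (x + k)‖ ≤ 2 * k := by
  have h1 : ∑ x ∈ range N, g (x + k) = ∑ x ∈ Ico k (k + N), g x := by
    rw [Finset.sum_Ico_eq_sum_range]
    simp only [Nat.add_sub_cancel_left]
    exact Finset.sum_congr rfl fun i _ => by rw [add_comm]
  have h2 : (∑ x ∈ Ico 0 k, g x) + ∑ x ∈ Ico k (k + N), g x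
      = (∑ x ∈ Ico 0 N, g x) + ∑ x ∈ Ico N (k + N), g x := by
    rw [Finset.sum_Ico_consecutive _ (Nat.zero_le k) (by omega),
      Finset.sum_Ico_consecutive _ (Nat.zero_le N) (by omega)]
  have h3 : (∑ x ∈ range N, g x) - ∑ x ∈ range N, g (x + k)
      = (∑ x ∈ range k, g x) - ∑ x ∈ Ico N (k + N), g x := by
    rw [h1]
    simp only [range_eq_Ico]
    linear_combination -h2
  rw [h3]
  have htri : ‖(∑ x ∈ range k, g x) - ∑ x ∈ Ico N (k + N), g x‖
      ≤ ‖∑ x ∈ range k, g x‖ + ‖∑ x ∈ Ico N (k + N), g x‖ := by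
    simpa [sub_eq_add_neg] using
      norm_add_le (∑ x ∈ range k, g x) (-(∑ x ∈ Ico N (k + N), g x))
  refine htri.trans ?_
  have hb := add_le_add (sum_abs_one_le h (range k)) (sum_abs_one_le h (Ico N (k + N)))
  refine hb.trans ?_
  rw [Finset.card_range, Nat.card_Ico, Nat.add_sub_cancel]
  push_cast
  linarith

/-- Reduction of a single exponential sum to an average of double sums: for any `f : ℝ → ℝ`,
integers `M, N ≥ 1` and `a ≥ 0`,
`|∑_{x=0}^{N-1} e(f(x))| ≤ M⁻² ∑_{x=0}^{N-1} |∑_{y,z=1}^{M} e(f(x + a y z))| + 2 a M²`. -/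
theorem single_sum_le_double_sum (f : ℝ → ℝ) (M N a : ℕ) (hM : 1 ≤ M) (hN : 1 ≤ N) :
    ‖∑ x ∈ Finset.range N, Complex.exp (2 * Real.pi * Complex.I * f x)‖ ≤
      (1 / (M : ℝ) ^ 2) * ∑ x ∈ Finset.range N,
          ‖∑ y ∈ Finset.Icc 1 M, ∑ z ∈ Finset.Icc 1 M,
            Complex.exp (2 * Real.pi * Complex.I * f (x + (a : ℝ) * y * z))‖
        + 2 * (a : ℝ) * (M : ℝ) ^ 2 := by
  set g : ℕ → ℂ := fun n => Complex.exp (2 * Real.pi * Complex.I * f n) with hg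
  have habs : ∀ n, ‖g n‖ = 1 := by
    intro n
    rw [hg]
    simp [Complex.norm_exp]
  have hMpos : (0 : ℝ) < (M : ℝ) ^ 2 := by positivity
  set S := ∑ x ∈ range N, g x with hS
  have hcast : ∀ x y z : ℕ, Complex.exp (2 * Real.pi * Complex.I * f (x + (a : ℝ) * y * z))
      = g (x + a * y * z) := by
    intro x y z
    rw [hg]
    push_cast
    ring_nf
  set T := ∑ x ∈ range N, ‖∑ y ∈ Icc 1 M, ∑ z ∈ Icc 1 M, g (x + a * y * z)‖ with hT
  have key : (M : ℝ) ^ 2 * ‖S‖ ≤ T + 2 * (a : ℝ) * (M : ℝ) ^ 4 := by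
    have hMS : (M : ℝ) ^ 2 * ‖S‖
        = ‖∑ y ∈ Icc 1 M, ∑ z ∈ Icc 1 M, S‖ := by
      rw [Finset.sum_const, Finset.sum_const, Nat.card_Icc, Nat.add_sub_cancel, smul_smul,
        nsmul_eq_mul, norm_mul, Complex.norm_natCast]
      push_cast
      ring
    rw [hMS]
    have hsplit : (∑ y ∈ Icc 1 M, ∑ z ∈ Icc 1 M, S)
        = (∑ y ∈ Icc 1 M, ∑ z ∈ Icc 1 M, ∑ x ∈ range N, g (x + a * y * z))
          + ∑ y ∈ Icc 1 M, ∑ z ∈ Icc 1 M, (S - ∑ x ∈ range N, g (x + a * y * z)) := by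
      rw [← Finset.sum_add_distrib]
      apply Finset.sum_congr rfl; intro y _
      rw [← Finset.sum_add_distrib]
      apply Finset.sum_congr rfl; intro z _
      ring
    rw [hsplit]
    refine (norm_add_le _ _).trans ?_
    apply add_le_add
    · have hswap : (∑ y ∈ Icc 1 M, ∑ z ∈ Icc 1 M, ∑ x ∈ range N, g (x + a * y * z))
          = ∑ x ∈ range N, ∑ y ∈ Icc 1 M, ∑ z ∈ Icc 1 M, g (x + a * y * z) := by
        rw [show (∑ y ∈ Icc 1 M, ∑ z ∈ Icc 1 M, ∑ x ∈ range N, g (x + a * y * z))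
            = ∑ y ∈ Icc 1 M, ∑ x ∈ range N, ∑ z ∈ Icc 1 M, g (x + a * y * z) from
          Finset.sum_congr rfl fun y _ => Finset.sum_comm]
        exact Finset.sum_comm
      rw [hswap, hT]
      exact norm_sum_le _ _
    · calc ‖∑ y ∈ Icc 1 M, ∑ z ∈ Icc 1 M,
            (S - ∑ x ∈ range N, g (x + a * y * z))‖
          ≤ ∑ y ∈ Icc 1 M, ∑ z ∈ Icc 1 M,
            ‖S - ∑ x ∈ range N, g (x + a * y * z)‖ := by
            refine le_trans (norm_sum_le _ _) ?_
            exact Finset.sum_le_sum fun y _ => norm_sum_le _ _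
        _ ≤ ∑ y ∈ Icc 1 M, ∑ z ∈ Icc 1 M, (2 * (a : ℝ) * (M : ℝ) ^ 2) := by
            apply Finset.sum_le_sum; intro y hy
            apply Finset.sum_le_sum; intro z hz
            have hyM := (Finset.mem_Icc.mp hy).2
            have hzM := (Finset.mem_Icc.mp hz).2
            refine le_trans (shift_err habs N (a * y * z)) ?_
            have h0 : (0:ℝ) ≤ (a:ℝ) := Nat.cast_nonneg a
            have hy' : (y:ℝ) ≤ M := by exact_mod_cast hyM
            have hz' : (z:ℝ) ≤ M := by exact_mod_cast hzM
            have hyz : (y:ℝ) * z ≤ (M:ℝ) * M :=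
              mul_le_mul hy' hz' (Nat.cast_nonneg z) (Nat.cast_nonneg M)
            have h2 : (a:ℝ) * ((y:ℝ) * z) ≤ (a:ℝ) * ((M:ℝ) * M) :=
              mul_le_mul_of_nonneg_left hyz h0
            push_cast
            nlinarith [h2]
        _ ≤ 2 * (a : ℝ) * (M : ℝ) ^ 4 := by
            rw [Finset.sum_const, Finset.sum_const, Nat.card_Icc, Nat.add_sub_cancel,
              smul_smul, nsmul_eq_mul]
            push_cast
            have hM1 : (1:ℝ) ≤ M := by exact_mod_cast hM
            nlinarith [Nat.cast_nonneg (α := ℝ) a]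
  have hrw : ∀ x ∈ range N,
      ‖∑ y ∈ Icc 1 M, ∑ z ∈ Icc 1 M,
        Complex.exp (2 * Real.pi * Complex.I * f (x + (a : ℝ) * y * z))‖
      = ‖∑ y ∈ Icc 1 M, ∑ z ∈ Icc 1 M, g (x + a * y * z)‖ := by
    intro x _
    congr 1
    exact Finset.sum_congr rfl fun y _ => Finset.sum_congr rfl fun z _ => hcast x y z
  rw [Finset.sum_congr rfl hrw, ← hT]
  have hdiv : ‖S‖ ≤ (T + 2 * (a:ℝ) * (M:ℝ) ^ 4) / (M:ℝ) ^ 2 := by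
    rw [le_div_iff₀ hMpos]
    linarith [key]
  refine hdiv.trans ?_
  have heq : (T + 2 * (a:ℝ) * (M:ℝ) ^ 4) / (M:ℝ) ^ 2
      = (1 / (M:ℝ) ^ 2) * T + 2 * (a:ℝ) * (M:ℝ) ^ 2 := by
    field_simp
  rw [heq]
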